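/- Let c ∈ [0,1), a ≥ 0, f : ℝ → ℝ with |f(t)| ≤ a|t| for all t, and β, γ > 0. Let (y_n) satisfy y_{n+1} = c·y_n + f(y_n) − f(y_{n−1}) for n ≥ 2, and set V_n = β(y_n − f(y_{n−1}))² + γ(f(y_{n−1}))². Then for all n ≥ 2, V_{n+1} − V_n ≤ −A·y_n² where A = −γa² − (β²/γ)(1−c)² + β(1−c²). -/

import Mathlib

theorem stmt4 (c a : ℝ) (hc0 : 0 ≤ c) (hc1 : c < 1) (ha0 : 0 ≤ a)
    (f : ℝ → ℝ) (hfb : ∀ t : ℝ, |f t| ≤ a * |t|)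
    (β γ : ℝ) (hβ : 0 < β) (hγ : 0 < γ) (y : ℕ → ℝ)
    (hy : ∀ n : ℕ, 2 ≤ n → y (n + 1) = c * y n + f (y n) - f (y (n - 1)))
    (V : ℕ → ℝ)
    (hV : ∀ n : ℕ, V n = β * (y n - f (y (n - 1))) ^ 2 + γ * (f (y (n - 1))) ^ 2) :
    ∀ n : ℕ, 2 ≤ n →
      V (n + 1) - V n ≤
        -(-γ * a ^ 2 - β ^ 2 / γ * (1 - c) ^ 2 + β * (1 - c ^ 2)) * y n ^ 2 := by
  intro n hn
  have h1 : (n + 1 : ℕ) - 1 = n := rfl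
  have hVn1 := hV (n + 1)
  have hVn := hV n
  rw [h1, hy n hn] at hVn1
  have hfsq : f (y n) ^ 2 ≤ a ^ 2 * y n ^ 2 := by
    have h := hfb (y n)
    have h2 : |f (y n)| ^ 2 ≤ (a * |y n|) ^ 2 :=
      pow_le_pow_left₀ (abs_nonneg _) h 2
    rw [sq_abs] at h2
    calc f (y n) ^ 2 ≤ (a * |y n|) ^ 2 := h2
      _ = a ^ 2 * y n ^ 2 := by rw [mul_pow, sq_abs]
  have hsq : 0 ≤ (f (y (n - 1)) - β * (1 - c) * y n / γ) ^ 2 := sq_nonneg _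
  rw [hVn1, hVn]
  have hγ' : γ ≠ 0 := ne_of_gt hγ
  rw [← mul_le_mul_iff_right₀ hγ]
  have hD : (β ^ 2 / γ) * γ = β ^ 2 := div_mul_cancel₀ _ hγ'
  generalize β ^ 2 / γ = q at hD ⊢
  have hD2 : q * γ * y n ^ 2 = β ^ 2 * y n ^ 2 := by rw [hD]
  nlinarith [sq_nonneg (γ * f (y (n-1)) - β * (1 - c) * y n), hD2,
    mul_le_mul_of_nonneg_left hfsq (le_of_lt (mul_pos hγ hγ)), mul_pos hγ hβ]
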